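/- Let (X^ε, Ω, P^ε) be a generalized clustering process on a finite connected graph with n ≥ 1 particles, and assume the family is irreducible. Then the family is OM-reversible, with ν(x) = |s(x)| − 1 satisfying the order-of-magnitude detailed balance condition; moreover, if π^ε are stationary distributions for P^ε whose entries have integer orders of magnitude φ(π(x)), then φ(π(x)) = |s(x)| − 1 for every x ∈ Ω. -/
import Mathlib

open Finset

/-- `f` is `Θ(ε^k)` as `ε → 0⁺`: there are positive constants `M₁, M₂, ε̄` with
`M₁ ε^k ≤ f ε ≤ M₂ ε^k` for all `0 < ε < ε̄`. -/
def IsTheta (f : ℝ → ℝ) (k : ℤ) : Prop :=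
  ∃ M₁ M₂ εbar : ℝ, 0 < M₁ ∧ 0 < M₂ ∧ 0 < εbar ∧
    ∀ ε : ℝ, 0 < ε → ε < εbar → M₁ * ε ^ k ≤ f ε ∧ f ε ≤ M₂ * ε ^ k

/-- `P(u,v) > 0` in the order-of-magnitude sense: `ε ↦ P^ε(u,v)` is `Θ(ε^k)`
for some integer `k`. -/
def EPos {Ω : Type*} (P : ℝ → Ω → Ω → ℝ) (u v : Ω) : Prop :=
  ∃ k : ℤ, IsTheta (fun ε => P ε u v) k

/-- Configurations of `n` particles on the vertex set `V`. -/
abbrev Config (V : Type) [Fintype V] (n : ℕ) := {x : V → ℕ // ∑ v, x v = n}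

noncomputable instance Config.fintype {V : Type} [Fintype V] [DecidableEq V] {n : ℕ} :
    Fintype (Config V n) :=
  Fintype.ofInjective
    (fun x : Config V n => fun v : V =>
      (⟨x.val v, Nat.lt_succ_of_le ((Finset.single_le_sum
        (f := x.val) (fun i _ => Nat.zero_le _) (Finset.mem_univ v)).trans
        (le_of_eq x.2))⟩ : Fin (n + 1)))
    (fun a b h => Subtype.ext (funext fun v => congrArg Fin.val (congrFun h v)))

/-- The configuration `x^{i,j}` obtained from `x` by moving one particle from vertex `i`
to vertex `j` (with `x^{i,i} = x`). -/
def move {V : Type} [DecidableEq V] (x : V → ℕ) (i j : V) : V → ℕ :=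
  if i = j then x else Function.update (Function.update x i (x i - 1)) j (x j + 1)

/-- The support of a configuration: the set of occupied vertices. -/
def supp {V : Type} [Fintype V] [DecidableEq V] (x : V → ℕ) : Finset V :=
  Finset.univ.filter fun v => x v ≠ 0

/- ### Auxiliary lemmas -/

lemma zpow_le_zpow_small {ε : ℝ} (hε : 0 < ε) (hε1 : ε ≤ 1) {m k : ℤ} (h : m ≤ k) :
    ε ^ k ≤ ε ^ m := by
  have h1 : ε ^ k = ε ^ m * ε ^ (k - m) := by
    rw [← zpow_add₀ hε.ne']; ring_nf
  have h2 : ε ^ (k - m) = ε ^ (k - m).toNat := by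
    rw [← zpow_natCast, Int.toNat_of_nonneg (by omega)]
  have h3 : ε ^ (k - m).toNat ≤ 1 := pow_le_one₀ hε.le hε1
  nlinarith [zpow_pos hε m, zpow_pos hε (k - m)]

lemma IsTheta.congr {f g : ℝ → ℝ} {k : ℤ} (h : IsTheta f k)
    (hfg : ∃ δ > (0:ℝ), ∀ ε, 0 < ε → ε < δ → f ε = g ε) : IsTheta g k := by
  obtain ⟨M₁, M₂, e, h1, h2, h3, h4⟩ := h
  obtain ⟨δ, hδ, hfg⟩ := hfg
  exact ⟨M₁, M₂, min e δ, h1, h2, lt_min h3 hδ, fun ε hε hε' => by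
    rw [← hfg ε hε (hε'.trans_le (min_le_right _ _))]
    exact h4 ε hε (hε'.trans_le (min_le_left _ _))⟩

lemma IsTheta.unique {f : ℝ → ℝ} {k l : ℤ} (hk : IsTheta f k) (hl : IsTheta f l) : k = l := by
  have key : ∀ (g : ℝ → ℝ) (a b : ℤ), IsTheta g a → IsTheta g b → a < b → False := by
    intro g a b ⟨M₁, M₂, e, h1, h2, h3, h4⟩ ⟨N₁, N₂, e', g1, g2, g3, g4⟩ hab
    set ε := min (min e e') (min 1 (M₁ / N₂)) / 2 with hεdef
    have hd : 0 < M₁ / N₂ := div_pos h1 g2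
    have hεpos : 0 < ε := by positivity
    have hle1 := min_le_left (min e e') (min 1 (M₁ / N₂))
    have hle2 := min_le_right (min e e') (min 1 (M₁ / N₂))
    have hle3 := min_le_left e e'
    have hle4 := min_le_right e e'
    have hle5 := min_le_left (1:ℝ) (M₁ / N₂)
    have hle6 := min_le_right (1:ℝ) (M₁ / N₂)
    have hεe : ε < e := by simp only [hεdef]; linarith
    have hεe' : ε < e' := by simp only [hεdef]; linarith
    have hε1 : ε ≤ 1 := by simp only [hεdef]; linarith
    have hεM : N₂ * ε < M₁ := by
      have hεlt : ε < M₁ / N₂ := by simp only [hεdef]; linarith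
      calc N₂ * ε < N₂ * (M₁ / N₂) := mul_lt_mul_of_pos_left hεlt g2
        _ = M₁ := by field_simp
    have hga := h4 ε hεpos hεe
    have hgb := g4 ε hεpos hεe'
    have hpa := zpow_pos hεpos a
    have h7 : ε ^ b = ε ^ (b - a) * ε ^ a := by rw [← zpow_add₀ hεpos.ne']; ring_nf
    have h8 : ε ^ (b - a) ≤ ε := by
      have := zpow_le_zpow_small hεpos hε1 (show (1:ℤ) ≤ b - a by omega)
      simpa using this
    have h9 : N₂ * ε ^ b ≤ N₂ * (ε * ε ^ a) := by
      rw [h7]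
      exact mul_le_mul_of_nonneg_left (mul_le_mul_of_nonneg_right h8 hpa.le) g2.le
    have h10 : N₂ * (ε * ε ^ a) < M₁ * ε ^ a := by
      have : N₂ * ε * ε ^ a < M₁ * ε ^ a := mul_lt_mul_of_pos_right hεM hpa
      linarith [this]
    linarith [hga.1, hgb.2]
  rcases lt_trichotomy k l with h | h | h
  · exact absurd (key f k l hk hl h) not_false
  · exact h
  · exact absurd (key f l k hl hk h) not_false

lemma IsTheta.mul {f g : ℝ → ℝ} {k l : ℤ} (hf : IsTheta f k) (hg : IsTheta g l) :
    IsTheta (fun ε => f ε * g ε) (k + l) := by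
  obtain ⟨M₁, M₂, e, h1, h2, h3, h4⟩ := hf
  obtain ⟨N₁, N₂, e', g1, g2, g3, g4⟩ := hg
  refine ⟨M₁ * N₁, M₂ * N₂, min e e', by positivity, by positivity, lt_min h3 g3,
    fun ε hε hε' => ?_⟩
  obtain ⟨ha1, ha2⟩ := h4 ε hε (hε'.trans_le (min_le_left _ _))
  obtain ⟨hb1, hb2⟩ := g4 ε hε (hε'.trans_le (min_le_right _ _))
  have hz : ε ^ (k + l) = ε ^ k * ε ^ l := zpow_add₀ hε.ne' k l
  have hf0 : (0:ℝ) ≤ f ε := le_trans (by positivity) ha1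
  have hg0 : (0:ℝ) ≤ g ε := le_trans (by positivity) hb1
  constructor
  · show M₁ * N₁ * ε ^ (k + l) ≤ f ε * g ε
    calc M₁ * N₁ * ε ^ (k + l) = (M₁ * ε ^ k) * (N₁ * ε ^ l) := by rw [hz]; ring
      _ ≤ f ε * g ε := mul_le_mul ha1 hb1 (by positivity) hf0
  · show f ε * g ε ≤ M₂ * N₂ * ε ^ (k + l)
    calc f ε * g ε ≤ (M₂ * ε ^ k) * (N₂ * ε ^ l) := mul_le_mul ha2 hb2 hg0 (by positivity)
      _ = M₂ * N₂ * ε ^ (k + l) := by rw [hz]; ring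

lemma IsTheta.add {f g : ℝ → ℝ} {k l : ℤ} (hf : IsTheta f k) (hg : IsTheta g l) :
    IsTheta (fun ε => f ε + g ε) (min k l) := by
  obtain ⟨M₁, M₂, e, h1, h2, h3, h4⟩ := hf
  obtain ⟨N₁, N₂, e', g1, g2, g3, g4⟩ := hg
  refine ⟨min M₁ N₁, M₂ + N₂, min (min e e') 1, by positivity, by positivity,
    by simp [h3, g3], fun ε hε hε' => ?_⟩
  have he : ε < e := hε'.trans_le ((min_le_left _ _).trans (min_le_left _ _))
  have he' : ε < e' := hε'.trans_le ((min_le_left _ _).trans (min_le_right _ _))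
  have h1' : ε ≤ 1 := (hε'.trans_le (min_le_right _ _)).le
  obtain ⟨ha1, ha2⟩ := h4 ε hε he
  obtain ⟨hb1, hb2⟩ := g4 ε hε he'
  have hk' : ε ^ k ≤ ε ^ (min k l) := zpow_le_zpow_small hε h1' (min_le_left _ _)
  have hl' : ε ^ l ≤ ε ^ (min k l) := zpow_le_zpow_small hε h1' (min_le_right _ _)
  have hzk := zpow_pos hε k
  have hzl := zpow_pos hε l
  have hfpos : 0 < f ε := lt_of_lt_of_le (by positivity) ha1
  have hgpos : 0 < g ε := lt_of_lt_of_le (by positivity) hb1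
  constructor
  · show (min M₁ N₁) * ε ^ (min k l) ≤ f ε + g ε
    rcases min_cases k l with ⟨hm, _⟩ | ⟨hm, _⟩
    · have : (min M₁ N₁) * ε ^ (min k l) ≤ M₁ * ε ^ k := by
        rw [hm]; exact mul_le_mul_of_nonneg_right (min_le_left _ _) hzk.le
      linarith
    · have : (min M₁ N₁) * ε ^ (min k l) ≤ N₁ * ε ^ l := by
        rw [hm]; exact mul_le_mul_of_nonneg_right (min_le_right _ _) hzl.le
      linarith
  · show f ε + g ε ≤ (M₂ + N₂) * ε ^ (min k l)
    have e1 : M₂ * ε ^ k ≤ M₂ * ε ^ (min k l) := mul_le_mul_of_nonneg_left hk' h2.le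
    have e2 : N₂ * ε ^ l ≤ N₂ * ε ^ (min k l) := mul_le_mul_of_nonneg_left hl' g2.le
    nlinarith

lemma isTheta_sum {ι : Type*} {T : Finset ι} (hT : T.Nonempty) (f : ι → ℝ → ℝ) (k : ι → ℤ)
    (h : ∀ i ∈ T, IsTheta (f i) (k i)) :
    ∃ i₀ ∈ T, (∀ i ∈ T, k i₀ ≤ k i) ∧ IsTheta (fun ε => ∑ i ∈ T, f i ε) (k i₀) := by
  classical
  induction hT using Finset.Nonempty.cons_induction with
  | singleton a => exact ⟨a, mem_singleton_self a, by simp,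
      by simpa using h a (mem_singleton_self a)⟩
  | cons a s ha hs ih =>
    obtain ⟨i₀, hi₀, hmin, hθ⟩ := ih (fun i hi => h i (mem_cons_of_mem hi))
    have hθa := h a (mem_cons_self a s)
    have hadd : IsTheta (fun ε => f a ε + ∑ i ∈ s, f i ε) (min (k a) (k i₀)) :=
      hθa.add hθ
    have hsum : (fun ε => ∑ i ∈ Finset.cons a s ha, f i ε)
        = fun ε => f a ε + ∑ i ∈ s, f i ε := by
      funext ε; rw [Finset.sum_cons]
    rcases min_cases (k a) (k i₀) with ⟨hm, hle⟩ | ⟨hm, hle⟩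
    · refine ⟨a, mem_cons_self a s, ?_, by rw [hsum, ← hm]; exact hadd⟩
      intro i hi
      rcases Finset.mem_cons.mp hi with h' | h'
      · rw [h']
      · exact le_trans hle (hmin i h')
    · refine ⟨i₀, mem_cons_of_mem hi₀, ?_, by rw [hsum, ← hm]; exact hadd⟩
      intro i hi
      rcases Finset.mem_cons.mp hi with h' | h'
      · rw [h']; exact hle.le
      · exact hmin i h'

lemma supp_move_eq {V : Type} [Fintype V] [DecidableEq V] {x : V → ℕ} {i j : V}
    (hij : i ≠ j) (hi : 1 ≤ x i) :
    supp (move x i j) = insert j (if x i = 1 then (supp x).erase i else supp x) := by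
  ext v
  simp only [supp, move, if_neg hij, mem_filter, mem_univ, true_and, mem_insert]
  rcases eq_or_ne v j with rfl | hvj
  · simp [Function.update_self]
  · rw [Function.update_of_ne hvj]
    rcases eq_or_ne v i with rfl | hvi
    · rw [Function.update_self]
      split_ifs with h1
      · simp only [mem_erase, ne_eq, mem_filter, mem_univ, true_and]
        constructor
        · intro h; omega
        · rintro (h | h)
          · exact absurd h hvj
          · exact absurd h (by simp)
      · simp only [mem_filter, mem_univ, true_and]
        constructor
        · intro _; right; omega
        · intro _; omega
    · rw [Function.update_of_ne hvi]
      split_ifs with h1 <;>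
        simp [mem_erase, hvi, hvj, mem_filter]

lemma card_supp_move {V : Type} [Fintype V] [DecidableEq V] {x : V → ℕ} {i j : V}
    (hij : i ≠ j) (hi : 1 ≤ x i) :
    (supp (move x i j)).card = (supp x).card ∨
    (supp x).card + 1 = (supp (move x i j)).card ∨
    (supp (move x i j)).card + 1 = (supp x).card := by
  rw [supp_move_eq hij hi]
  have hiS : i ∈ supp x := by simp only [supp, mem_filter, mem_univ, true_and]; omega
  have hcard : 1 ≤ (supp x).card := card_pos.mpr ⟨i, hiS⟩
  rcases eq_or_ne (x i) 1 with h1 | h1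
  · rw [if_pos h1]
    by_cases hj : x j = 0
    · have hnm : j ∉ (supp x).erase i := by
        simp [supp, mem_erase, hj]
      rw [card_insert_of_notMem hnm, card_erase_of_mem hiS]
      left; omega
    · have hm : j ∈ (supp x).erase i := by
        simp only [mem_erase, supp, mem_filter, mem_univ, true_and]
        exact ⟨Ne.symm hij, hj⟩
      rw [insert_eq_self.mpr hm, card_erase_of_mem hiS]
      right; right; omega
  · rw [if_neg h1]
    by_cases hj : x j = 0
    · have hnm : j ∉ supp x := by simp [supp, hj]
      rw [card_insert_of_notMem hnm]
      right; left; rfl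
    · have hm : j ∈ supp x := by simp [supp, hj]
      rw [insert_eq_self.mpr hm]
      left; rfl

lemma exists_exit {α : Type*} (p : α → Prop) (c : ℕ → α) :
    ∀ r : ℕ, p (c 0) → ¬ p (c r) → ∃ i < r, p (c i) ∧ ¬ p (c (i+1)) := by
  intro r
  induction r with
  | zero => intro h h'; exact absurd h h'
  | succ r ih =>
    intro h0 hr
    by_cases hcr : p (c r)
    · exact ⟨r, Nat.lt_succ_self r, hcr, hr⟩
    · obtain ⟨i, hi, h⟩ := ih h0 hcr
      exact ⟨i, Nat.lt_succ_of_lt hi, h⟩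

set_option maxHeartbeats 1000000 in
/-- A generalized clustering process (irreducible) is OM-reversible with
`ν(x) = |s(x)| − 1` satisfying order-of-magnitude detailed balance; moreover any
stationary distributions `π^ε` with integer orders of magnitude satisfy
`φ(π(x)) = |s(x)| − 1`. -/
theorem generalized_clustering_process_OM_reversible
    {V : Type} [Fintype V] [DecidableEq V]
    (G : SimpleGraph V) (hconn : G.Connected)
    (n : ℕ) (hn : 1 ≤ n)
    (P : ℝ → Config V n → Config V n → ℝ)
    (hstoch : ∀ ε : ℝ, 0 < ε →
      (∀ x y : Config V n, 0 ≤ P ε x y) ∧ ∀ x : Config V n, ∑ y, P ε x y = 1)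
    (hmoves : ∀ x y : Config V n, EPos P x y →
      y = x ∨ ∃ i j : V, G.Adj i j ∧ 1 ≤ x.val i ∧ y.val = move x.val i j)
    (hzero : ∀ x y : Config V n, ¬ EPos P x y →
      ∃ εbar > (0 : ℝ), ∀ ε : ℝ, 0 < ε → ε < εbar → P ε x y = 0)
    (hsym : ∀ x y : Config V n, EPos P x y ↔ EPos P y x)
    (φP : Config V n → Config V n → ℤ)
    (hφP : ∀ x y : Config V n, EPos P x y → IsTheta (fun ε => P ε x y) (φP x y))
    (h01 : ∀ x y : Config V n, EPos P x y → φP x y = 0 ∨ φP x y = 1)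
    (heq : ∀ x y : Config V n, EPos P x y →
      (supp x.val).card = (supp y.val).card → φP x y = φP y x)
    (hstep : ∀ x y : Config V n, EPos P x y →
      (supp x.val).card + 1 = (supp y.val).card → φP x y = 1 ∧ φP y x = 0)
    (hirr : ∀ u v : Config V n, ∃ (r : ℕ) (c : ℕ → Config V n),
      c 0 = u ∧ c r = v ∧ ∀ i < r, EPos P (c i) (c (i + 1))) :
    (∀ x y : Config V n, EPos P x y →
      (((supp x.val).card : ℤ) - 1) + φP x y = (((supp y.val).card : ℤ) - 1) + φP y x) ∧
    (∀ (π : ℝ → Config V n → ℝ) (φπ : Config V n → ℤ),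
      (∀ ε : ℝ, 0 < ε → (∀ z : Config V n, 0 ≤ π ε z) ∧ (∑ z, π ε z) = 1 ∧
        ∀ y : Config V n, (∑ x, π ε x * P ε x y) = π ε y) →
      (∀ z : Config V n, IsTheta (fun ε => π ε z) (φπ z)) →
      ∀ z : Config V n, φπ z = ((supp z.val).card : ℤ) - 1) := by
  classical
  have part1 : ∀ x y : Config V n, EPos P x y →
      (((supp x.val).card : ℤ) - 1) + φP x y = (((supp y.val).card : ℤ) - 1) + φP y x := by
    intro x y hxy
    rcases hmoves x y hxy with rfl | ⟨i, j, hadj, hi, hy⟩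
    · rfl
    · have hij : i ≠ j := hadj.ne
      have htri := card_supp_move hij hi
      rw [← hy] at htri
      rcases htri with h | h | h
      · have := heq x y hxy h.symm; omega
      · obtain ⟨h1, h2⟩ := hstep x y hxy h; omega
      · obtain ⟨h1, h2⟩ := hstep y x ((hsym x y).mp hxy) h; omega
  refine ⟨part1, ?_⟩
  intro π φπ hπ hφπ z
  have hne : Nonempty (Config V n) := ⟨z⟩
  have huniv : (Finset.univ : Finset (Config V n)).Nonempty := univ_nonempty
  set d : Config V n → ℤ := fun a => φπ a - (((supp a.val).card : ℤ) - 1) with hd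
  have himg : (Finset.univ.image d).Nonempty := huniv.image d
  set m : ℤ := Finset.min' (Finset.univ.image d) himg with hm
  have hm_le : ∀ w, m ≤ d w :=
    fun w => Finset.min'_le _ _ (mem_image_of_mem d (mem_univ w))
  obtain ⟨z₀, -, hz₀⟩ := Finset.mem_image.mp (Finset.min'_mem (Finset.univ.image d) himg)
  -- uniform bound for vanishing transition probabilities
  have key : ∀ p : Config V n × Config V n, ∃ δ, 0 < δ ∧ (¬ EPos P p.1 p.2 →
      ∀ ε : ℝ, 0 < ε → ε < δ → P ε p.1 p.2 = 0) := by
    intro p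
    by_cases h : EPos P p.1 p.2
    · exact ⟨1, one_pos, fun h' => absurd h h'⟩
    · obtain ⟨δ, hδ, hz'⟩ := hzero p.1 p.2 h
      exact ⟨δ, hδ, fun _ => hz'⟩
  choose fδ hfδ1 hfδ2 using key
  have hprodne : (Finset.univ : Finset (Config V n × Config V n)).Nonempty := univ_nonempty
  set δ₀ : ℝ := Finset.univ.inf' hprodne fδ with hδ₀def
  have hδ₀pos : 0 < δ₀ := by
    rw [hδ₀def, Finset.lt_inf'_iff]
    exact fun p _ => hfδ1 p
  have hδ₀ : ∀ a b : Config V n, ¬ EPos P a b → ∀ ε : ℝ, 0 < ε → ε < δ₀ → P ε a b = 0 := by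
    intro a b h ε hε hεδ
    exact hfδ2 (a, b) h ε hε (lt_of_lt_of_le hεδ (Finset.inf'_le _ (mem_univ (a,b))))
  -- main claim: d is constant equal to m
  have hconst : ∀ w, d w = m := by
    by_contra hcon
    push_neg at hcon
    obtain ⟨w, hw⟩ := hcon
    obtain ⟨r, c, hc0, hcr, hcE⟩ := hirr z₀ w
    have h0 : d (c 0) = m := by rw [hc0]; exact hz₀
    have hrno : ¬ d (c r) = m := by rw [hcr]; exact hw
    obtain ⟨i, hir, hci, hci1⟩ := exists_exit (fun a => d a = m) c r h0 hrno
    have hEP : EPos P (c i) (c (i+1)) := hcE i hir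
    set S : Finset (Config V n) := Finset.univ.filter (fun a => d a = m) with hS
    set Sc : Finset (Config V n) := Finset.univ.filter (fun a => ¬ d a = m) with hSc
    -- exact cut balance
    have cut : ∀ ε : ℝ, 0 < ε →
        (∑ p ∈ S ×ˢ Sc, π ε p.1 * P ε p.1 p.2)
          = ∑ p ∈ Sc ×ˢ S, π ε p.1 * P ε p.1 p.2 := by
      intro ε hε
      obtain ⟨hnn, hsum1, hstat⟩ := hπ ε hε
      obtain ⟨hPnn, hProw⟩ := hstoch ε hε
      have key1 : ∑ y ∈ S, π ε y
          = (∑ y ∈ S, ∑ x ∈ S, π ε x * P ε x y)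
            + ∑ y ∈ S, ∑ x ∈ Sc, π ε x * P ε x y := by
        rw [← Finset.sum_add_distrib]
        refine Finset.sum_congr rfl fun y _ => ?_
        rw [Finset.sum_filter_add_sum_filter_not Finset.univ (fun a => d a = m)
          (fun x => π ε x * P ε x y)]
        exact (hstat y).symm
      have key2 : ∑ y ∈ S, π ε y
          = (∑ y ∈ S, ∑ x ∈ S, π ε y * P ε y x)
            + ∑ y ∈ S, ∑ x ∈ Sc, π ε y * P ε y x := by
        rw [← Finset.sum_add_distrib]
        refine Finset.sum_congr rfl fun y _ => ?_
        rw [Finset.sum_filter_add_sum_filter_not Finset.univ (fun a => d a = m)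
          (fun x => π ε y * P ε y x), ← Finset.mul_sum, hProw y, mul_one]
      have key3 : ∑ y ∈ S, ∑ x ∈ S, π ε x * P ε x y
          = ∑ y ∈ S, ∑ x ∈ S, π ε y * P ε y x := Finset.sum_comm
      have key4 : ∑ y ∈ S, ∑ x ∈ Sc, π ε x * P ε x y
          = ∑ y ∈ S, ∑ x ∈ Sc, π ε y * P ε y x := by linarith
      calc ∑ p ∈ S ×ˢ Sc, π ε p.1 * P ε p.1 p.2
          = ∑ y ∈ S, ∑ x ∈ Sc, π ε y * P ε y x := by rw [Finset.sum_product]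
        _ = ∑ y ∈ S, ∑ x ∈ Sc, π ε x * P ε x y := key4.symm
        _ = ∑ x ∈ Sc, ∑ y ∈ S, π ε x * P ε x y := Finset.sum_comm
        _ = ∑ p ∈ Sc ×ˢ S, π ε p.1 * P ε p.1 p.2 := by rw [Finset.sum_product]
    set T1 : Finset (Config V n × Config V n) :=
      (S ×ˢ Sc).filter (fun p => EPos P p.1 p.2) with hT1
    set T2 : Finset (Config V n × Config V n) :=
      (Sc ×ˢ S).filter (fun p => EPos P p.1 p.2) with hT2
    have hT1ne : T1.Nonempty := ⟨(c i, c (i+1)), by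
      rw [hT1, mem_filter, Finset.mem_product]
      exact ⟨⟨mem_filter.mpr ⟨mem_univ _, hci⟩, mem_filter.mpr ⟨mem_univ _, hci1⟩⟩, hEP⟩⟩
    have hT2ne : T2.Nonempty := ⟨(c (i+1), c i), by
      rw [hT2, mem_filter, Finset.mem_product]
      exact ⟨⟨mem_filter.mpr ⟨mem_univ _, hci1⟩, mem_filter.mpr ⟨mem_univ _, hci⟩⟩,
        (hsym _ _).mp hEP⟩⟩
    obtain ⟨p₀, hp₀T, hp₀min, hp₀θ⟩ := isTheta_sum hT1ne
      (fun p ε => π ε p.1 * P ε p.1 p.2) (fun p => φπ p.1 + φP p.1 p.2)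
      (fun p hp => (hφπ p.1).mul (hφP p.1 p.2 (mem_filter.mp hp).2))
    obtain ⟨q₀, hq₀T, hq₀min, hq₀θ⟩ := isTheta_sum hT2ne
      (fun p ε => π ε p.1 * P ε p.1 p.2) (fun p => φπ p.1 + φP p.1 p.2)
      (fun p hp => (hφπ p.1).mul (hφP p.1 p.2 (mem_filter.mp hp).2))
    have hsplit : ∀ (A B : Finset (Config V n)), ∀ ε : ℝ, 0 < ε → ε < δ₀ →
        (∑ p ∈ (A ×ˢ B).filter (fun p => EPos P p.1 p.2), π ε p.1 * P ε p.1 p.2)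
          = ∑ p ∈ A ×ˢ B, π ε p.1 * P ε p.1 p.2 := by
      intro A B ε hε hεδ
      rw [← Finset.sum_filter_add_sum_filter_not (A ×ˢ B) (fun p => EPos P p.1 p.2)
        (fun p => π ε p.1 * P ε p.1 p.2)]
      have hz0 : (∑ p ∈ (A ×ˢ B).filter (fun p => ¬ EPos P p.1 p.2),
          π ε p.1 * P ε p.1 p.2) = 0 :=
        Finset.sum_eq_zero fun p hp => by
          rw [hδ₀ p.1 p.2 (mem_filter.mp hp).2 ε hε hεδ, mul_zero]
      rw [hz0, add_zero]
    have hθ1 : IsTheta (fun ε => ∑ p ∈ S ×ˢ Sc, π ε p.1 * P ε p.1 p.2)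
        (φπ p₀.1 + φP p₀.1 p₀.2) :=
      hp₀θ.congr ⟨δ₀, hδ₀pos, fun ε hε hεδ => hsplit S Sc ε hε hεδ⟩
    have hθ2 : IsTheta (fun ε => ∑ p ∈ S ×ˢ Sc, π ε p.1 * P ε p.1 p.2)
        (φπ q₀.1 + φP q₀.1 q₀.2) :=
      (hq₀θ.congr ⟨δ₀, hδ₀pos, fun ε hε hεδ => hsplit Sc S ε hε hεδ⟩).congr
        ⟨δ₀, hδ₀pos, fun ε hε _ => (cut ε hε).symm⟩
    have heqk : φπ p₀.1 + φP p₀.1 p₀.2 = φπ q₀.1 + φP q₀.1 q₀.2 := hθ1.unique hθ2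
    -- contradiction
    obtain ⟨hq₀mem, hq₀E⟩ := mem_filter.mp hq₀T
    obtain ⟨hy', hx'⟩ := Finset.mem_product.mp hq₀mem
    have hE' : EPos P q₀.2 q₀.1 := (hsym _ _).mpr hq₀E
    have hp'T : (q₀.2, q₀.1) ∈ T1 := by
      rw [hT1, mem_filter, Finset.mem_product]
      exact ⟨⟨hx', hy'⟩, hE'⟩
    have hmin' : φπ p₀.1 + φP p₀.1 p₀.2 ≤ φπ q₀.2 + φP q₀.2 q₀.1 := hp₀min _ hp'T
    have hDB := part1 q₀.2 q₀.1 hE'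
    have hdx : d q₀.2 = m := (mem_filter.mp hx').2
    have hdy : ¬ d q₀.1 = m := (mem_filter.mp hy').2
    have hdy2 : m ≤ d q₀.1 := hm_le _
    have hdx' : φπ q₀.2 - (((supp (q₀.2).val).card : ℤ) - 1) = m := hdx
    have hdy' : ¬ φπ q₀.1 - (((supp (q₀.1).val).card : ℤ) - 1) = m := hdy
    have hdy2' : m ≤ φπ q₀.1 - (((supp (q₀.1).val).card : ℤ) - 1) := hdy2
    have hq₀eq : φπ q₀.1 + φP q₀.1 q₀.2 ≤ φπ q₀.2 + φP q₀.2 q₀.1 := heqk ▸ hmin'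
    have hmin'' : φπ q₀.1 + φP q₀.1 q₀.2 ≤ φπ q₀.2 + φP q₀.2 q₀.1 := hq₀eq
    omega
  -- normalization : min of φπ is 0
  obtain ⟨z₁, -, hz₁min, hz₁θ⟩ := isTheta_sum huniv (fun a ε => π ε a) φπ
    (fun a _ => hφπ a)
  have hone : IsTheta (fun _ : ℝ => (1:ℝ)) (φπ z₁) :=
    hz₁θ.congr ⟨1, one_pos, fun ε hε _ => (hπ ε hε).2.1⟩
  have hθ0 : IsTheta (fun _ : ℝ => (1:ℝ)) 0 :=
    ⟨1, 1, 1, one_pos, one_pos, one_pos, fun ε hε _ => by norm_num⟩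
  have hz₁0 : φπ z₁ = 0 := hone.unique hθ0
  -- supports are nonempty
  have hsupp1 : ∀ a : Config V n, 1 ≤ (supp a.val).card := by
    intro a
    apply card_pos.mpr
    have hv : ∃ v, a.val v ≠ 0 := by
      by_contra h
      push_neg at h
      have h0 : ∑ v, a.val v = 0 := Finset.sum_eq_zero (fun v _ => h v)
      rw [a.2] at h0
      omega
    obtain ⟨v, hv⟩ := hv
    exact ⟨v, by simp [supp, hv]⟩
  -- a configuration with singleton support
  obtain ⟨v₀, -⟩ : ∃ v, z.val v ≠ 0 := by
    by_contra h
    push_neg at h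
    have h0 : ∑ v, z.val v = 0 := Finset.sum_eq_zero (fun v _ => h v)
    rw [z.2] at h0
    omega
  set x1 : Config V n := ⟨fun v => if v = v₀ then n else 0, by
    rw [Finset.sum_ite_eq' Finset.univ v₀ (fun _ => n)]
    simp⟩ with hx1
  have hsx1 : supp x1.val = {v₀} := by
    ext v
    simp only [supp, mem_filter, mem_univ, true_and, mem_singleton, hx1]
    by_cases hv : v = v₀
    · simp [hv]; omega
    · simp [hv]
  have hcx1 : (supp x1.val).card = 1 := by rw [hsx1]; exact card_singleton v₀
  have h1 : φπ x1 - (((supp x1.val).card : ℤ) - 1) = m := hconst x1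
  have h2 : φπ z₁ - (((supp z₁.val).card : ℤ) - 1) = m := hconst z₁
  have h3 : φπ z₁ ≤ φπ x1 := hz₁min x1 (mem_univ x1)
  have h4 : φπ z - (((supp z.val).card : ℤ) - 1) = m := hconst z
  have h5 := hsupp1 z₁
  omega
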